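/- Let d be a derivation of a ring R with kernel R^d, and let t ∈ ker d^2. Then for every r ∈ R^d, the commutator δ_t(r) = tr − rt lies in R^d, and δ_t is a derivation of the subring R^d. -/
import Mathlib

/-- Let `d` be a derivation of a ring `R` with commutative kernel `R^d`, and let `t ∈ ker d²`.
Then for every `r ∈ R^d` the commutator `δ_t r = t * r - r * t` lies in `R^d`, and `δ_t`
satisfies the Leibniz rule on `R^d`, i.e. `δ_t` is a derivation of the subring `R^d`. -/
theorem stmt16 {R : Type*} [Ring R] (d : R → R)
    (hadd : ∀ x y, d (x + y) = d x + d y)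
    (hleib : ∀ x y, d (x * y) = d x * y + x * d y)
    (hcomm : ∀ x y : R, d x = 0 → d y = 0 → x * y = y * x)
    (t : R) (ht : d (d t) = 0) :
    (∀ r, d r = 0 → d (t * r - r * t) = 0) ∧
    (∀ r s : R, d r = 0 → d s = 0 →
      t * (r * s) - (r * s) * t = (t * r - r * t) * s + r * (t * s - s * t)) := by
  constructor
  · intro r hr
    have h0 : d 0 = 0 := by
      have := hadd 0 0; simpa using this.symm
    have hsub : d (t * r - r * t) + d (r * t) = d (t * r) := by
      have := hadd (t * r - r * t) (r * t); simpa using this.symm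
    have h1 : d (t * r) = d t * r := by rw [hleib, hr, mul_zero, add_zero]
    have h2 : d (r * t) = r * d t := by rw [hleib, hr, zero_mul, zero_add]
    have hc : d t * r = r * d t := hcomm (d t) r ht hr
    have := hsub
    rw [h1, h2, hc] at this
    exact add_eq_right.mp this
  · intro r s _ _
    noncomm_ring
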